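/- Let g : ℝ → ℝ be a C¹ function which is 1-periodic and has zero mean, i.e. ∫₀¹ g(x) dx = 0. Then sup_{x ∈ ℝ} |g(x)| ≤ ∫₀¹ max(g'(x), 0) dx. -/

import Mathlib

/-- A `C¹`, `1`-periodic, zero-mean function `g : ℝ → ℝ` satisfies
`sup_x |g(x)| ≤ ∫₀¹ max(g'(x), 0) dx`. -/
theorem stmt_9 (g : ℝ → ℝ) (hg : ContDiff ℝ 1 g) (hper : ∀ x, g (x + 1) = g x)
    (hmean : ∫ x in (0:ℝ)..1, g x = 0) :
    (⨆ x : ℝ, |g x|) ≤ ∫ x in (0:ℝ)..1, max (deriv g x) 0 := by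
  have hper' : Function.Periodic g 1 := hper
  have hcont : Continuous g := hg.continuous
  have hdc : Continuous (deriv g) := hg.continuous_deriv le_rfl
  have hdper : Function.Periodic (deriv g) 1 := by
    intro x
    have : (fun y => g (y + 1)) = g := funext hper
    calc deriv g (x + 1) = deriv (fun y => g (y + 1)) x := (deriv_comp_add_const g 1 x).symm
    _ = deriv g x := by rw [this]
  have hmper : Function.Periodic (fun x => max (deriv g x) 0) 1 := fun x => by
    simp [hdper x]
  have hmc : Continuous (fun x => max (deriv g x) 0) := hdc.max continuous_const
  set P := ∫ x in (0:ℝ)..1, max (deriv g x) 0 with hPdef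
  have hPnonneg : 0 ≤ P :=
    intervalIntegral.integral_nonneg (by norm_num) (fun x _ => le_max_right _ _)
  have key : ∀ u v : ℝ, u ≤ v → v ≤ u + 1 → g v - g u ≤ P := by
    intro u v huv hv1
    have h1 : g v - g u = ∫ x in u..v, deriv g x :=
      (intervalIntegral.integral_deriv_eq_sub (fun x _ => hg.differentiable one_ne_zero x)
        (hdc.intervalIntegrable _ _)).symm
    have h2 : (∫ x in u..v, deriv g x) ≤ ∫ x in u..v, max (deriv g x) 0 :=
      intervalIntegral.integral_mono_on huv (hdc.intervalIntegrable _ _)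
        (hmc.intervalIntegrable _ _) (fun x _ => le_max_left _ _)
    have h3 : (∫ x in u..v, max (deriv g x) 0) ≤ ∫ x in u..u + 1, max (deriv g x) 0 :=
      intervalIntegral.integral_mono_interval le_rfl huv hv1
        (Filter.Eventually.of_forall fun x => le_max_right _ _)
        (hmc.intervalIntegrable _ _)
    have h4 : (∫ x in u..u + 1, max (deriv g x) 0) = P := by
      simpa using hmper.intervalIntegral_add_eq u 0
    linarith
  -- min point a, max point b on [0,1]
  obtain ⟨a, ha01, hamin⟩ := (isCompact_Icc (a := (0:ℝ)) (b := 1)).exists_isMinOn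
    (Set.nonempty_Icc.2 zero_le_one) hcont.continuousOn
  obtain ⟨b, hb01, hbmax⟩ := (isCompact_Icc (a := (0:ℝ)) (b := 1)).exists_isMaxOn
    (Set.nonempty_Icc.2 zero_le_one) hcont.continuousOn
  have hga : g a ≤ 0 := by
    by_contra h
    push_neg at h
    have : (0:ℝ) < ∫ x in (0:ℝ)..1, g x :=
      intervalIntegral.intervalIntegral_pos_of_pos_on (hcont.intervalIntegrable _ _)
        (fun x hx => lt_of_lt_of_le h (hamin (Set.mem_Icc.2 ⟨hx.1.le, hx.2.le⟩) : g a ≤ g x)) one_pos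
    linarith [hmean]
  have hgb : 0 ≤ g b := by
    by_contra h
    push_neg at h
    have : (∫ x in (0:ℝ)..1, g x) < 0 := by
      have : (0:ℝ) < ∫ x in (0:ℝ)..1, -g x :=
        intervalIntegral.intervalIntegral_pos_of_pos_on
          (hcont.neg.intervalIntegrable _ _)
          (fun x hx => by
            have h2 : g x ≤ g b := hbmax (Set.mem_Icc.2 ⟨hx.1.le, hx.2.le⟩)
            show (0:ℝ) < -g x
            linarith) one_pos
      rw [intervalIntegral.integral_neg] at this
      linarith
    linarith [hmean]
  have habs : ∀ x : ℝ, |g x| ≤ P := by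
    intro x
    rw [abs_le]
    constructor
    · -- use max point: find m with x ≤ b + m ≤ x + 1
      set m : ℤ := ⌈x - b⌉ with hm
      have h1 : x ≤ b + m := by
        have := Int.le_ceil (x - b); push_cast at this ⊢; linarith
      have h2 : b + m ≤ x + 1 := by
        have := Int.ceil_lt_add_one (x - b); push_cast at this ⊢; linarith
      have hgbm : g (b + m) = g b := by
        have := hper'.sub_int_mul_eq (x := b + m) m
        simpa using this.symm
      have := key x (b + m) h1 h2
      rw [hgbm] at this
      linarith
    · set n : ℤ := ⌊x - a⌋ with hn
      have h1 : a + n ≤ x := by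
        have := Int.floor_le (x - a); push_cast at this ⊢; linarith
      have h2 : x ≤ a + n + 1 := by
        have := Int.lt_floor_add_one (x - a); push_cast at this ⊢; linarith
      have hgan : g (a + n) = g a := by
        have := hper'.sub_int_mul_eq (x := a + n) n
        simpa using this.symm
      have := key (a + n) x h1 h2
      rw [hgan] at this
      linarith
  exact Real.iSup_le habs hPnonneg
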